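/- Let M be a left 𝕆-module, let x₁, …, xₙ ∈ 𝒜(M) be ℝ-linearly independent associative elements, and let r₁, …, rₙ ∈ 𝕆. If y = Σᵢ rᵢxᵢ is itself an associative element of M, then every coefficient rᵢ is real: rᵢ ∈ ℝ for each i. -/

import Mathlib

noncomputable section

open scoped Quaternion

/-- The octonions, realized as pairs of quaternions via the Cayley–Dickson construction. -/
def Octo : Type := ℍ[ℝ] × ℍ[ℝ]

namespace Octo

instance : AddCommGroup Octo := inferInstanceAs (AddCommGroup (ℍ[ℝ] × ℍ[ℝ]))
instance : Module ℝ Octo := inferInstanceAs (Module ℝ (ℍ[ℝ] × ℍ[ℝ]))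

/-- Build an octonion from a pair of quaternions. -/
def mk (a b : ℍ[ℝ]) : Octo := (a, b)

/-- First quaternion component. -/
def p1 (x : Octo) : ℍ[ℝ] := (show ℍ[ℝ] × ℍ[ℝ] from x).1

/-- Second quaternion component. -/
def p2 (x : Octo) : ℍ[ℝ] := (show ℍ[ℝ] × ℍ[ℝ] from x).2

/-- Cayley–Dickson multiplication: `(a,b)(c,d) = (ac − d̄b, da + bc̄)`. -/
instance : Mul Octo :=
  ⟨fun x y => mk (p1 x * p1 y - star (p2 y) * p2 x) (p2 y * p1 x + p2 x * star (p1 y))⟩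

instance : One Octo := ⟨mk 1 0⟩

/-- Octonion conjugation: for `x = (a,b)`, `x̄ = (ā, −b)`. -/
def conj (x : Octo) : Octo := mk (star (p1 x)) (-(p2 x))

/-- The octonion associator `[x,y,z] = (xy)z − x(yz)`. -/
def assoc (x y z : Octo) : Octo := x * y * z - x * (y * z)

/-- The octonion commutator `[x,y] = xy − yx`. -/
def comm (x y : Octo) : Octo := x * y - y * x

/-- The canonical embedding of the reals into the octonions. -/
def ofReal (r : ℝ) : Octo := r • (1 : Octo)

end Octo

section OMod

variable {M : Type*} [AddCommGroup M] [Module ℝ M]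
variable {N : Type*} [AddCommGroup N] [Module ℝ N]

/-- `IsOMod sm` says that the scalar multiplication `sm : 𝕆 × M → M` makes the real vector
space `M` a left 𝕆-module: `sm` is ℝ-bilinear, unital, and the left associator is
alternating in its two octonion arguments. -/
structure IsOMod (sm : Octo → M → M) : Prop where
  smul_add : ∀ (p : Octo) (m n : M), sm p (m + n) = sm p m + sm p n
  add_smul : ∀ (p q : Octo) (m : M), sm (p + q) m = sm p m + sm q m
  real_smul : ∀ (r : ℝ) (p : Octo) (m : M), sm (r • p) m = r • sm p m
  smul_real : ∀ (r : ℝ) (p : Octo) (m : M), sm p (r • m) = r • sm p m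
  one_smul : ∀ m : M, sm 1 m = m
  alt : ∀ (p q : Octo) (m : M),
    sm (p * q) m - sm p (sm q m) = -(sm (q * p) m - sm q (sm p m))

/-- The left associator `[p,q,m] = (pq)m − p(qm)`. -/
def oLassoc (sm : Octo → M → M) (p q : Octo) (m : M) : M :=
  sm (p * q) m - sm p (sm q m)

/-- The set `𝒜(M)` of associative elements: `[p,q,m] = 0` for all `p,q ∈ 𝕆`. -/
def assocSet (sm : Octo → M → M) : Set M :=
  {m | ∀ p q : Octo, oLassoc sm p q m = 0}

/-- The set `𝒜⁻(M)` of conjugate associative elements: `(pq)m = q(pm)` for all `p,q ∈ 𝕆`. -/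
def conjAssocSet (sm : Octo → M → M) : Set M :=
  {m | ∀ p q : Octo, sm (p * q) m = sm q (sm p m)}

/-- A homomorphism of left 𝕆-modules: an ℝ-linear map commuting with 𝕆-scalar
multiplication. -/
def IsOHom (sm : Octo → M → M) (sm' : Octo → N → N) (f : M → N) : Prop :=
  IsLinearMap ℝ f ∧ ∀ (p : Octo) (m : M), f (sm p m) = sm' p (f m)

/-- Two left 𝕆-modules are isomorphic if there is a bijective homomorphism between them. -/
def OIso (sm : Octo → M → M) (sm' : Octo → N → N) : Prop :=
  ∃ f : M → N, IsOHom sm sm' f ∧ Function.Bijective f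

/-- A submodule: a real subspace closed under 𝕆-scalar multiplication. -/
structure IsOSubmodule (sm : Octo → M → M) (S : Set M) : Prop where
  zero_mem : (0 : M) ∈ S
  add_mem : ∀ {x y : M}, x ∈ S → y ∈ S → x + y ∈ S
  smul_mem : ∀ (r : ℝ) {x : M}, x ∈ S → r • x ∈ S
  osmul_mem : ∀ (p : Octo) {x : M}, x ∈ S → sm p x ∈ S

/-- `⟨m⟩_𝕆`, the smallest submodule containing `m`, as a set. -/
def genSet (sm : Octo → M → M) (m : M) : Set M :=
  ⋂₀ {S : Set M | IsOSubmodule sm S ∧ m ∈ S}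

/-- An element `m` is cyclic if `⟨m⟩_𝕆 = 𝕆m`. -/
def IsOCyclic (sm : Octo → M → M) (m : M) : Prop :=
  genSet sm m = {x | ∃ p : Octo, x = sm p m}

/-- 𝕆-linear independence of a subset `S ⊆ M`: any finite 𝕆-linear combination of
distinct elements of `S` that vanishes has all coefficients zero. -/
def OLinIndep (sm : Octo → M → M) (S : Set M) : Prop :=
  ∀ (n : ℕ) (s : Fin n → M) (r : Fin n → Octo), Function.Injective s → (∀ i, s i ∈ S) →
    (∑ i, sm (r i) (s i)) = 0 → ∀ i, r i = 0

end OMod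

/-- The canonical left 𝕆-module structure on 𝕆 itself. -/
def oSmul : Octo → Octo → Octo := fun p x => p * x

/-- The left 𝕆-module structure `𝕆̄` on 𝕆: `p ·̂ x = p̄x`. -/
def oBarSmul : Octo → Octo → Octo := fun p x => Octo.conj p * x

section OctAux

open Octo

lemma p1_mk (a b : ℍ[ℝ]) : (Octo.mk a b).p1 = a := rfl
lemma p2_mk (a b : ℍ[ℝ]) : (Octo.mk a b).p2 = b := rfl
lemma p1_mul (x y : Octo) : (x * y).p1 = x.p1 * y.p1 - star y.p2 * x.p2 := rfl
lemma p2_mul (x y : Octo) : (x * y).p2 = y.p2 * x.p1 + x.p2 * star y.p1 := rfl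
lemma p1_one : (1 : Octo).p1 = 1 := rfl
lemma p2_one : (1 : Octo).p2 = 0 := rfl
lemma p1_zero : (0 : Octo).p1 = 0 := rfl
lemma p2_zero : (0 : Octo).p2 = 0 := rfl
lemma p1_add (x y : Octo) : (x + y).p1 = x.p1 + y.p1 := rfl
lemma p2_add (x y : Octo) : (x + y).p2 = x.p2 + y.p2 := rfl
lemma p1_sub (x y : Octo) : (x - y).p1 = x.p1 - y.p1 := rfl
lemma p2_sub (x y : Octo) : (x - y).p2 = x.p2 - y.p2 := rfl
lemma p1_neg (x : Octo) : (-x).p1 = -x.p1 := rfl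
lemma p2_neg (x : Octo) : (-x).p2 = -x.p2 := rfl
lemma p1_smul (r : ℝ) (x : Octo) : (r • x).p1 = r • x.p1 := rfl
lemma p2_smul (r : ℝ) (x : Octo) : (r • x).p2 = r • x.p2 := rfl

lemma octo_ext (x y : Octo) (h1 : x.p1 = y.p1) (h2 : x.p2 = y.p2) : x = y := Prod.ext h1 h2

lemma octo_eq_iff (x y : Octo) : x = y ↔
    (x.p1.re = y.p1.re ∧ x.p1.imI = y.p1.imI ∧ x.p1.imJ = y.p1.imJ ∧ x.p1.imK = y.p1.imK ∧
     x.p2.re = y.p2.re ∧ x.p2.imI = y.p2.imI ∧ x.p2.imJ = y.p2.imJ ∧ x.p2.imK = y.p2.imK) := by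
  constructor
  · rintro rfl; exact ⟨rfl, rfl, rfl, rfl, rfl, rfl, rfl, rfl⟩
  · rintro ⟨h1, h2, h3, h4, h5, h6, h7, h8⟩
    exact octo_ext _ _ (QuaternionAlgebra.ext h1 h2 h3 h4) (QuaternionAlgebra.ext h5 h6 h7 h8)

def qI : ℍ[ℝ] := ⟨0,1,0,0⟩
def qJ : ℍ[ℝ] := ⟨0,0,1,0⟩
def qK : ℍ[ℝ] := ⟨0,0,0,1⟩
@[simp] lemma qI_re : qI.re = 0 := rfl
@[simp] lemma qI_imI : qI.imI = 1 := rfl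
@[simp] lemma qI_imJ : qI.imJ = 0 := rfl
@[simp] lemma qI_imK : qI.imK = 0 := rfl
@[simp] lemma qJ_re : qJ.re = 0 := rfl
@[simp] lemma qJ_imI : qJ.imI = 0 := rfl
@[simp] lemma qJ_imJ : qJ.imJ = 1 := rfl
@[simp] lemma qJ_imK : qJ.imK = 0 := rfl
@[simp] lemma qK_re : qK.re = 0 := rfl
@[simp] lemma qK_imI : qK.imI = 0 := rfl
@[simp] lemma qK_imJ : qK.imJ = 0 := rfl
@[simp] lemma qK_imK : qK.imK = 1 := rfl

def E1 : Octo := Octo.mk qI 0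
def E2 : Octo := Octo.mk qJ 0
def E3 : Octo := Octo.mk qK 0
def E4 : Octo := Octo.mk 0 1
def E5 : Octo := Octo.mk 0 qI
def E6 : Octo := Octo.mk 0 qJ
def E7 : Octo := Octo.mk 0 qK

/-- The averaging operator whose value is always real. -/
def Qop (a : Octo) : Octo :=
  a - E1*(E2*(E3*a)) - E1*(E4*(E5*a)) + E1*(E6*(E7*a))
    - E2*(E4*(E6*a)) - E2*(E5*(E7*a)) - E3*(E4*(E7*a)) + E3*(E5*(E6*a))

set_option maxHeartbeats 2000000 in
lemma Qop_eq (a : Octo) : Qop a = (8 * a.p1.re) • (1 : Octo) := by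
  rw [octo_eq_iff]
  refine ⟨?_, ?_, ?_, ?_, ?_, ?_, ?_, ?_⟩ <;>
    simp [Qop, E1, E2, E3, E4, E5, E6, E7, p1_mul, p2_mul, p1_sub, p2_sub, p1_add, p2_add,
      p1_mk, p2_mk, p1_smul, p2_smul, p1_one, p2_one, smul_eq_mul] <;> ring

lemma re_E1_mul (a : Octo) : (E1 * a).p1.re = -a.p1.imI := by
  simp [E1, p1_mul, p1_mk, p2_mk]
lemma re_E2_mul (a : Octo) : (E2 * a).p1.re = -a.p1.imJ := by
  simp [E2, p1_mul, p1_mk, p2_mk]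
lemma re_E3_mul (a : Octo) : (E3 * a).p1.re = -a.p1.imK := by
  simp [E3, p1_mul, p1_mk, p2_mk]
lemma re_E4_mul (a : Octo) : (E4 * a).p1.re = -a.p2.re := by
  simp [E4, p1_mul, p1_mk, p2_mk]
lemma re_E5_mul (a : Octo) : (E5 * a).p1.re = -a.p2.imI := by
  simp [E5, p1_mul, p1_mk, p2_mk]
lemma re_E6_mul (a : Octo) : (E6 * a).p1.re = -a.p2.imJ := by
  simp [E6, p1_mul, p1_mk, p2_mk]
lemma re_E7_mul (a : Octo) : (E7 * a).p1.re = -a.p2.imK := by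
  simp [E7, p1_mul, p1_mk, p2_mk]

lemma octo_nucleus (a : Octo) (hz : ∀ p q : Octo, Octo.assoc p q a = 0) :
    a ∈ Set.range Octo.ofReal := by
  have h1 := hz E1 E2
  have h2 := hz E1 E4
  have h3 := hz E2 E4
  rw [Octo.assoc, octo_eq_iff] at h1 h2 h3
  simp [E1, E2, E4, p1_mul, p2_mul, p1_sub, p2_sub, p1_mk, p2_mk, p1_zero, p2_zero] at h1 h2 h3
  obtain ⟨k1, k2, k3, k4⟩ := h1
  obtain ⟨k5, k6, k7, k8⟩ := h2
  obtain ⟨k9, k10, k11, k12⟩ := h3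
  refine ⟨a.p1.re, ?_⟩
  rw [Octo.ofReal, octo_eq_iff]
  refine ⟨?_, ?_, ?_, ?_, ?_, ?_, ?_, ?_⟩ <;>
    simp [p1_smul, p2_smul, p1_one, p2_one, smul_eq_mul] <;> linarith

end OctAux


/-- If `x₁,…,xₙ ∈ 𝒜(M)` are ℝ-linearly independent and `y = Σ rᵢxᵢ` is itself
associative, then every coefficient `rᵢ` is real. -/
theorem stmt10 {M : Type*} [AddCommGroup M] [Module ℝ M]
    (sm : Octo → M → M) (h : IsOMod sm)
    (n : ℕ) (x : Fin n → M) (r : Fin n → Octo)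
    (hx : ∀ i, x i ∈ assocSet sm) (hli : LinearIndependent ℝ x)
    (hy : (∑ i, sm (r i) (x i)) ∈ assocSet sm) :
    ∀ i, r i ∈ Set.range Octo.ofReal := by
  classical
  -- basic module facts
  have sm_zero : ∀ p : Octo, sm p 0 = 0 := by
    intro p
    have := h.smul_real 0 p 0
    simpa using this
  have sub_sm : ∀ (p q : Octo) (m : M), sm (p - q) m = sm p m - sm q m := by
    intro p q m
    have h1 := h.add_smul p (-q) m
    have h2 := h.real_smul (-1) q m
    rw [sub_eq_add_neg, h1, ← neg_one_smul ℝ q, h2, neg_one_smul, ← sub_eq_add_neg]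
  have sm_sum : ∀ (p : Octo) (f : Fin n → M),
      sm p (∑ i, f i) = ∑ i, sm p (f i) := by
    intro p f
    exact map_sum (AddMonoidHom.mk' (sm p) (h.smul_add p)) f Finset.univ
  -- closure of zero linear combinations under left multiplication of coefficients
  have clos : ∀ (s : Octo) (c : Fin n → Octo), (∑ i, sm (c i) (x i)) = 0 →
      (∑ i, sm (s * c i) (x i)) = 0 := by
    intro s c hc
    have e : ∀ i, sm (s * c i) (x i) = sm s (sm (c i) (x i)) := by
      intro i
      exact sub_eq_zero.mp (hx i s (c i))
    calc (∑ i, sm (s * c i) (x i)) = ∑ i, sm s (sm (c i) (x i)) :=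
          Finset.sum_congr rfl fun i _ => e i
      _ = sm s (∑ i, sm (c i) (x i)) := (sm_sum s _).symm
      _ = 0 := by rw [hc]; exact sm_zero s
  have w3 : ∀ (s t u : Octo) (c : Fin n → Octo), (∑ i, sm (c i) (x i)) = 0 →
      (∑ i, sm (s * (t * (u * c i))) (x i)) = 0 := by
    intro s t u c hc
    exact clos s _ (clos t _ (clos u c hc))
  -- extraction of the real part
  have expand : ∀ (a : Octo) (m : M), sm (Qop a) m =
      sm a m - sm (E1*(E2*(E3*a))) m - sm (E1*(E4*(E5*a))) m + sm (E1*(E6*(E7*a))) m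
        - sm (E2*(E4*(E6*a))) m - sm (E2*(E5*(E7*a))) m - sm (E3*(E4*(E7*a))) m
        + sm (E3*(E5*(E6*a))) m := by
    intro a m
    simp only [Qop, sub_sm, h.add_smul]
  have reZero : ∀ (c : Fin n → Octo), (∑ i, sm (c i) (x i)) = 0 →
      ∀ i, (c i).p1.re = 0 := by
    intro c hc
    have hQ : (∑ i, sm (Qop (c i)) (x i)) = 0 := by
      have e : (∑ i, sm (Qop (c i)) (x i)) =
          (∑ i, sm (c i) (x i)) - (∑ i, sm (E1*(E2*(E3*c i))) (x i))
            - (∑ i, sm (E1*(E4*(E5*c i))) (x i)) + (∑ i, sm (E1*(E6*(E7*c i))) (x i))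
            - (∑ i, sm (E2*(E4*(E6*c i))) (x i)) - (∑ i, sm (E2*(E5*(E7*c i))) (x i))
            - (∑ i, sm (E3*(E4*(E7*c i))) (x i)) + (∑ i, sm (E3*(E5*(E6*c i))) (x i)) := by
        simp only [expand, Finset.sum_add_distrib, Finset.sum_sub_distrib]
      rw [e, hc, w3 E1 E2 E3 c hc, w3 E1 E4 E5 c hc, w3 E1 E6 E7 c hc, w3 E2 E4 E6 c hc,
        w3 E2 E5 E7 c hc, w3 E3 E4 E7 c hc, w3 E3 E5 E6 c hc]
      simp
    have hQ' : (∑ i, (8 * (c i).p1.re) • (x i)) = 0 := by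
      have e : ∀ i, sm (Qop (c i)) (x i) = (8 * (c i).p1.re) • (x i) := by
        intro i
        rw [Qop_eq, h.real_smul, h.one_smul]
      calc (∑ i, (8 * (c i).p1.re) • (x i)) = ∑ i, sm (Qop (c i)) (x i) :=
            Finset.sum_congr rfl fun i _ => (e i).symm
        _ = 0 := hQ
    intro i
    have h8 : 8 * (c i).p1.re = 0 := linearIndependent_iff'.mp hli Finset.univ
      (fun i => 8 * (c i).p1.re) hQ' i (Finset.mem_univ i)
    linarith
  -- all coefficients of a vanishing combination are zero
  have allZero : ∀ (c : Fin n → Octo), (∑ i, sm (c i) (x i)) = 0 → ∀ i, c i = 0 := by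
    intro c hc i
    have k0 := reZero c hc i
    have k1 := reZero _ (clos E1 c hc) i
    have k2 := reZero _ (clos E2 c hc) i
    have k3 := reZero _ (clos E3 c hc) i
    have k4 := reZero _ (clos E4 c hc) i
    have k5 := reZero _ (clos E5 c hc) i
    have k6 := reZero _ (clos E6 c hc) i
    have k7 := reZero _ (clos E7 c hc) i
    rw [re_E1_mul] at k1
    rw [re_E2_mul] at k2
    rw [re_E3_mul] at k3
    rw [re_E4_mul] at k4
    rw [re_E5_mul] at k5
    rw [re_E6_mul] at k6
    rw [re_E7_mul] at k7
    rw [octo_eq_iff]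
    refine ⟨?_, ?_, ?_, ?_, ?_, ?_, ?_, ?_⟩ <;>
      simp [p1_zero, p2_zero] <;> linarith
  -- the associator combination vanishes
  have Hpq : ∀ p q : Octo, (∑ i, sm (Octo.assoc p q (r i)) (x i)) = 0 := by
    intro p q
    have h0 := hy (p * q) q
    have hA : sm (p * q) (∑ i, sm (r i) (x i)) = ∑ i, sm (p * q * r i) (x i) := by
      rw [sm_sum]
      refine Finset.sum_congr rfl fun i _ => ?_
      exact (sub_eq_zero.mp (hx i (p * q) (r i))).symm
    have hB : sm p (sm q (∑ i, sm (r i) (x i))) = ∑ i, sm (p * (q * r i)) (x i) := by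
      have e1 : sm q (∑ i, sm (r i) (x i)) = ∑ i, sm (q * r i) (x i) := by
        rw [sm_sum]
        refine Finset.sum_congr rfl fun i _ => ?_
        exact (sub_eq_zero.mp (hx i q (r i))).symm
      rw [e1, sm_sum]
      refine Finset.sum_congr rfl fun i _ => ?_
      exact (sub_eq_zero.mp (hx i p (q * r i))).symm
    have h1 := hy p q
    unfold oLassoc at h1
    calc (∑ i, sm (Octo.assoc p q (r i)) (x i))
        = ∑ i, (sm (p * q * r i) (x i) - sm (p * (q * r i)) (x i)) :=
          Finset.sum_congr rfl fun i _ => by rw [Octo.assoc, sub_sm]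
      _ = (∑ i, sm (p * q * r i) (x i)) - ∑ i, sm (p * (q * r i)) (x i) :=
          Finset.sum_sub_distrib _ _
      _ = sm (p * q) (∑ i, sm (r i) (x i)) - sm p (sm q (∑ i, sm (r i) (x i))) := by
          rw [hA, hB]
      _ = 0 := h1
  intro i
  exact octo_nucleus (r i) fun p q => allZero _ (Hpq p q) i
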